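/- Let λ > 0, ψ* ∈ (0,1], c ∈ [0,1), τ̄ > 0, and define τ₀ = ((1−c)/λ)·ψ*/(ψ*+2). If τ̄ e^{τ̄} < τ₀, then there exists β > 0 with β τ̄ < ψ* and β(1−c)e^{−τ̄} − 2λ − βτ̄λ ≥ 0; moreover such β exists if and only if 2λτ̄/((1−c)e^{−τ̄} − λτ̄) < ψ* with (1−c)e^{−τ̄} − λτ̄ > 0. -/

import Mathlib

theorem Linfty_parameter_compatibility (lam ψs c τbar : ℝ)
    (hlam : 0 < lam) (hψs0 : 0 < ψs) (hψs1 : ψs ≤ 1)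
    (hc0 : 0 ≤ c) (hc1 : c < 1) (hτbar : 0 < τbar) :
    (τbar * Real.exp τbar < ((1 - c) / lam) * (ψs / (ψs + 2)) →
      ∃ β : ℝ, 0 < β ∧ β * τbar < ψs ∧
        β * (1 - c) * Real.exp (-τbar) - 2 * lam - β * τbar * lam ≥ 0)
    ∧ ((∃ β : ℝ, 0 < β ∧ β * τbar < ψs ∧
        β * (1 - c) * Real.exp (-τbar) - 2 * lam - β * τbar * lam ≥ 0)
      ↔ ((1 - c) * Real.exp (-τbar) - lam * τbar > 0 ∧
          2 * lam * τbar / ((1 - c) * Real.exp (-τbar) - lam * τbar) < ψs)) := by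
  have hA : 0 < (1 - c) * Real.exp (-τbar) :=
    mul_pos (by linarith) (Real.exp_pos _)
  have hiff : (∃ β : ℝ, 0 < β ∧ β * τbar < ψs ∧
        β * (1 - c) * Real.exp (-τbar) - 2 * lam - β * τbar * lam ≥ 0)
      ↔ ((1 - c) * Real.exp (-τbar) - lam * τbar > 0 ∧
          2 * lam * τbar / ((1 - c) * Real.exp (-τbar) - lam * τbar) < ψs) := by
    constructor
    · rintro ⟨β, hβ, hβτ, hineq⟩
      have hD : 0 < (1 - c) * Real.exp (-τbar) - lam * τbar := by
        by_contra h
        push_neg at h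
        nlinarith
      refine ⟨hD, ?_⟩
      rw [div_lt_iff₀ hD]
      nlinarith
    · rintro ⟨hD, hfrac⟩
      rw [div_lt_iff₀ hD] at hfrac
      refine ⟨2 * lam / ((1 - c) * Real.exp (-τbar) - lam * τbar),
        by positivity, ?_, ?_⟩
      · rw [div_mul_eq_mul_div, div_lt_iff₀ hD]
        nlinarith
      · have hcancel : 2 * lam / ((1 - c) * Real.exp (-τbar) - lam * τbar) *
            ((1 - c) * Real.exp (-τbar) - lam * τbar) = 2 * lam :=
          div_mul_cancel₀ _ (ne_of_gt hD)
        nlinarith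
  refine ⟨?_, hiff⟩
  intro h
  rw [hiff]
  have hexp : Real.exp τbar * Real.exp (-τbar) = 1 := by
    rw [← Real.exp_add]; simp
  have hψ2 : 0 < ψs + 2 := by linarith
  have hkey : lam * τbar * (ψs + 2) < (1 - c) * Real.exp (-τbar) * ψs := by
    have h1 : lam * (τbar * Real.exp τbar) < (1 - c) * (ψs / (ψs + 2)) := by
      have := (mul_lt_mul_iff_right₀ hlam).mpr h
      calc lam * (τbar * Real.exp τbar)
          < lam * (((1 - c) / lam) * (ψs / (ψs + 2))) := this
        _ = (1 - c) * (ψs / (ψs + 2)) := by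
            field_simp
    have h2 : lam * (τbar * Real.exp τbar) * (ψs + 2) < (1 - c) * ψs := by
      rw [div_eq_mul_inv] at h1
      have := (mul_lt_mul_iff_left₀ hψ2).mpr h1
      calc lam * (τbar * Real.exp τbar) * (ψs + 2)
          < (1 - c) * (ψs * (ψs + 2)⁻¹) * (ψs + 2) := this
        _ = (1 - c) * ψs := by
            field_simp
    have h3 := (mul_lt_mul_iff_left₀ (Real.exp_pos (-τbar))).mpr h2
    calc lam * τbar * (ψs + 2)
        = lam * (τbar * Real.exp τbar) * (ψs + 2) * Real.exp (-τbar) := by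
          linear_combination (-(lam * τbar * (ψs + 2))) * hexp
      _ < (1 - c) * ψs * Real.exp (-τbar) := h3
      _ = (1 - c) * Real.exp (-τbar) * ψs := by ring
  constructor
  · nlinarith
  · have hD : 0 < (1 - c) * Real.exp (-τbar) - lam * τbar := by nlinarith
    rw [div_lt_iff₀ hD]
    nlinarith
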